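/- Let X_t ∈ ℝ^{n1×n2} and X ∈ ℝ^{n1×n2} both have rank r, with compact SVDs X_t = V_tΣ_tW_tᵀ and X = VΣWᵀ. Then ‖V_tV_tᵀ − VVᵀ‖ ≤ ‖X_t − X‖ / σ_min(X_t), ‖V_tV_tᵀ − VVᵀ‖_F ≤ √2·‖X_t − X‖_F / σ_min(X_t), ‖W_tW_tᵀ − WWᵀ‖ ≤ ‖X_t − X‖ / σ_min(X_t), and ‖W_tW_tᵀ − WWᵀ‖_F ≤ √2·‖X_t − X‖_F / σ_min(X_t). -/

import Mathlib

open Matrix MeasureTheory ProbabilityTheory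
open scoped BigOperators

noncomputable section

/-- Frobenius inner product `⟨A, B⟩ = trace (Aᵀ * B)`. -/
def frobInner {n1 n2 : ℕ} (A B : Matrix (Fin n1) (Fin n2) ℝ) : ℝ :=
  Matrix.trace (Aᵀ * B)

/-- Frobenius norm of a matrix. -/
def frobNorm {n1 n2 : ℕ} (A : Matrix (Fin n1) (Fin n2) ℝ) : ℝ :=
  Real.sqrt (∑ i, ∑ j, A i j ^ 2)

/-- Spectral (ℓ²-operator) norm of a matrix. -/
def specNorm {n1 n2 : ℕ} (A : Matrix (Fin n1) (Fin n2) ℝ) : ℝ :=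
  ‖LinearMap.toContinuousLinearMap (Matrix.toEuclideanLin A)‖

/-- Euclidean norm of a vector in ℝ^m. -/
def vecNorm {m : ℕ} (v : Fin m → ℝ) : ℝ :=
  Real.sqrt (∑ i, v i ^ 2)

/-- Smallest nonzero singular value of a matrix: the singular values of `X` are the
square roots of the eigenvalues of `Xᴴ * X`. -/
def sigmaMin {n1 n2 : ℕ} (X : Matrix (Fin n1) (Fin n2) ℝ) : ℝ :=
  sInf {s : ℝ | 0 < s ∧ ∃ i : Fin n2,
    s ^ 2 = ((Matrix.isHermitian_conjTranspose_mul_self X : (Xᵀ * X).IsHermitian)).eigenvalues i}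

/-- The measurement operator `𝒜(X) i = (1/√m) ⟨A i, X⟩`. -/
def measOp {n1 n2 m : ℕ} (A : Fin m → Matrix (Fin n1) (Fin n2) ℝ)
    (X : Matrix (Fin n1) (Fin n2) ℝ) : Fin m → ℝ :=
  fun i => (Real.sqrt m)⁻¹ * frobInner (A i) X

/-- The adjoint `𝒜*(u) = (1/√m) ∑ i, u i • A i`. -/
def measAdj {n1 n2 m : ℕ} (A : Fin m → Matrix (Fin n1) (Fin n2) ℝ)
    (u : Fin m → ℝ) : Matrix (Fin n1) (Fin n2) ℝ :=
  (Real.sqrt m)⁻¹ • ∑ i, u i • A i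

/-- The composite operator `𝒜*𝒜`. -/
def opAA {n1 n2 m : ℕ} (A : Fin m → Matrix (Fin n1) (Fin n2) ℝ)
    (X : Matrix (Fin n1) (Fin n2) ℝ) : Matrix (Fin n1) (Fin n2) ℝ :=
  measAdj A (measOp A X)

/-- Rank-`k` restricted isometry property with constant `δ`. -/
def HasRIP {n1 n2 m : ℕ} (A : Fin m → Matrix (Fin n1) (Fin n2) ℝ) (k : ℕ) (δ : ℝ) : Prop :=
  ∀ Z : Matrix (Fin n1) (Fin n2) ℝ, Z.rank ≤ k →
    (1 - δ) * frobNorm Z ^ 2 ≤ vecNorm (measOp A Z) ^ 2 ∧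
      vecNorm (measOp A Z) ^ 2 ≤ (1 + δ) * frobNorm Z ^ 2

/-- Compact SVD: `X = V * S * Wᵀ`, `V, W` with orthonormal columns, `S` diagonal with
positive diagonal entries. -/
def IsCompactSVD {n1 n2 r : ℕ} (X : Matrix (Fin n1) (Fin n2) ℝ)
    (V : Matrix (Fin n1) (Fin r) ℝ) (S : Matrix (Fin r) (Fin r) ℝ)
    (W : Matrix (Fin n2) (Fin r) ℝ) : Prop :=
  X = V * S * Wᵀ ∧ Vᵀ * V = 1 ∧ Wᵀ * W = 1 ∧
    (∀ i j, i ≠ j → S i j = 0) ∧ (∀ i, 0 < S i i)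

/-- `Vp` is a matrix whose columns form an orthonormal basis of the orthogonal
complement of the column space of `V` (which has orthonormal columns). -/
def IsOrthComplement {n r : ℕ} (V : Matrix (Fin n) (Fin r) ℝ)
    (Vp : Matrix (Fin n) (Fin (n - r)) ℝ) : Prop :=
  Vpᵀ * Vp = 1 ∧ Vᵀ * Vp = 0

end
noncomputable section
namespace S9
open Matrix
variable {a b c r n1 n2 : ℕ}

def gF {a b : ℕ} (A : Matrix (Fin a) (Fin b) ℝ) : ℝ := Matrix.trace (Aᵀ * A)
lemma gF_eq_sum (A : Matrix (Fin a) (Fin b) ℝ) : gF A = ∑ i, ∑ j, A i j ^ 2 := by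
  rw [gF, Matrix.trace]
  rw [Finset.sum_comm]
  simp [Matrix.diag, Matrix.mul_apply, sq]

lemma gF_nonneg (A : Matrix (Fin a) (Fin b) ℝ) : 0 ≤ gF A := by
  rw [gF_eq_sum]
  positivity

lemma frobNorm_eq (A : Matrix (Fin a) (Fin b) ℝ) :
    Real.sqrt (∑ i, ∑ j, A i j ^ 2) = Real.sqrt (gF A) := by rw [gF_eq_sum]

lemma gF_transpose (A : Matrix (Fin a) (Fin b) ℝ) : gF Aᵀ = gF A := by
  rw [gF_eq_sum, gF_eq_sum, Finset.sum_comm]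
  rfl

lemma gF_isometry_left_eq (W : Matrix (Fin b) (Fin r) ℝ) (hW : Wᵀ * W = 1)
    (N : Matrix (Fin r) (Fin c) ℝ) : gF (W * N) = gF N := by
  unfold gF
  rw [Matrix.transpose_mul, Matrix.mul_assoc, ← Matrix.mul_assoc Wᵀ, hW, Matrix.one_mul]

lemma gF_proj_decomp (R : Matrix (Fin a) (Fin a) ℝ) (hRs : Rᵀ = R) (hRi : R * R = R)
    (Z : Matrix (Fin a) (Fin c) ℝ) : gF Z = gF (R * Z) + gF (Z - R * Z) := by
  unfold gF
  have h1 : (R * Z)ᵀ * (R * Z) = Zᵀ * (R * Z) := by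
    rw [Matrix.transpose_mul, hRs, Matrix.mul_assoc, ← Matrix.mul_assoc R, hRi]
  have h2 : (Z - R * Z)ᵀ * (Z - R * Z) = Zᵀ * Z - Zᵀ * (R * Z) := by
    rw [Matrix.transpose_sub, Matrix.transpose_mul, hRs, Matrix.sub_mul, Matrix.mul_sub,
      Matrix.mul_sub]
    have : Zᵀ * R * (R * Z) = Zᵀ * (R * Z) := by
      rw [Matrix.mul_assoc, ← Matrix.mul_assoc R, hRi]
    rw [this, Matrix.mul_assoc]
    abel
  rw [h1, h2, Matrix.trace_sub]
  ring

lemma gF_proj_le (R : Matrix (Fin a) (Fin a) ℝ) (hRs : Rᵀ = R) (hRi : R * R = R)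
    (Z : Matrix (Fin a) (Fin c) ℝ) : gF (R * Z) ≤ gF Z := by
  have := gF_proj_decomp R hRs hRi Z
  have := gF_nonneg (Z - R * Z)
  linarith

lemma gF_sub_proj_le (R : Matrix (Fin a) (Fin a) ℝ) (hRs : Rᵀ = R) (hRi : R * R = R)
    (Z : Matrix (Fin a) (Fin c) ℝ) : gF (Z - R * Z) ≤ gF Z := by
  have := gF_proj_decomp R hRs hRi Z
  have := gF_nonneg (R * Z)
  linarith

lemma gF_mul_isometry_right_le (M : Matrix (Fin a) (Fin b) ℝ) (W : Matrix (Fin b) (Fin r) ℝ)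
    (hW : Wᵀ * W = 1) : gF (M * W) ≤ gF M := by
  have hRs : (W * Wᵀ)ᵀ = W * Wᵀ := by rw [Matrix.transpose_mul, Matrix.transpose_transpose]
  have hRi : (W * Wᵀ) * (W * Wᵀ) = W * Wᵀ := by
    rw [Matrix.mul_assoc, ← Matrix.mul_assoc Wᵀ, hW, Matrix.one_mul]
  calc gF (M * W) = gF ((M * W)ᵀ) := (gF_transpose _).symm
    _ = gF (Wᵀ * Mᵀ) := by rw [Matrix.transpose_mul]
    _ = gF (W * (Wᵀ * Mᵀ)) := (gF_isometry_left_eq W hW _).symm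
    _ = gF ((W * Wᵀ) * Mᵀ) := by rw [Matrix.mul_assoc]
    _ ≤ gF Mᵀ := gF_proj_le _ hRs hRi _
    _ = gF M := gF_transpose _

lemma gF_mul_isometryT_right_eq (N : Matrix (Fin a) (Fin r) ℝ) (V : Matrix (Fin b) (Fin r) ℝ)
    (hV : Vᵀ * V = 1) : gF (N * Vᵀ) = gF N := by
  calc gF (N * Vᵀ) = gF ((N * Vᵀ)ᵀ) := (gF_transpose _).symm
    _ = gF (V * Nᵀ) := by rw [Matrix.transpose_mul, Matrix.transpose_transpose]
    _ = gF Nᵀ := gF_isometry_left_eq V hV _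
    _ = gF N := gF_transpose _

lemma gF_mul_diag_le (M : Matrix (Fin a) (Fin r) ℝ) (d : Fin r → ℝ) (σ : ℝ) (hσ : 0 < σ)
    (hd : ∀ j, σ ≤ d j) :
    gF (M * Matrix.diagonal (fun j => (d j)⁻¹)) ≤ gF M / σ ^ 2 := by
  rw [gF_eq_sum, gF_eq_sum, Finset.sum_div]
  refine Finset.sum_le_sum fun i _ => ?_
  rw [Finset.sum_div]
  refine Finset.sum_le_sum fun j _ => ?_
  rw [Matrix.mul_diagonal, mul_pow, div_eq_mul_inv, ← inv_pow]
  refine mul_le_mul_of_nonneg_left ?_ (sq_nonneg _)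
  have h1 : 0 < d j := lt_of_lt_of_le hσ (hd j)
  rw [inv_pow, inv_pow]
  exact inv_anti₀ (by positivity) (pow_le_pow_left₀ hσ.le (hd j) 2)

lemma gF_PQ (P Q : Matrix (Fin a) (Fin a) ℝ) (hPs : Pᵀ = P) (hQs : Qᵀ = Q)
    (hPi : P * P = P) (hQi : Q * Q = Q) (htr : Matrix.trace P = Matrix.trace Q) :
    gF (P - Q) = 2 * gF (P - Q * P) := by
  have e1 : gF (P - Q) = Matrix.trace P + Matrix.trace Q - 2 * Matrix.trace (P * Q) := by
    unfold gF
    rw [Matrix.transpose_sub, hPs, hQs, Matrix.sub_mul, Matrix.mul_sub, Matrix.mul_sub,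
      Matrix.trace_sub, Matrix.trace_sub, Matrix.trace_sub, hPi, hQi,
      Matrix.trace_mul_comm Q P]
    ring
  have e2 : gF (P - Q * P) = Matrix.trace P - Matrix.trace (P * Q) := by
    unfold gF
    have hT : (P - Q * P)ᵀ = P - P * Q := by
      rw [Matrix.transpose_sub, hPs, Matrix.transpose_mul, hPs, hQs]
    rw [hT, Matrix.sub_mul, Matrix.mul_sub, Matrix.mul_sub, Matrix.trace_sub,
      Matrix.trace_sub, Matrix.trace_sub, hPi]
    have h3 : Matrix.trace (P * Q * P) = Matrix.trace (P * Q) := by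
      rw [Matrix.trace_mul_cycle, hPi]
    have h4 : Matrix.trace (P * Q * (Q * P)) = Matrix.trace (P * Q) := by
      rw [← Matrix.mul_assoc (P * Q) Q P, Matrix.mul_assoc P Q Q, hQi, h3]
    have h5 : Matrix.trace (P * (Q * P)) = Matrix.trace (P * Q) := by
      rw [← Matrix.mul_assoc, h3]
    rw [h3, h4, h5]
    ring
  rw [e1, e2, ← htr]
  ring


lemma vside_frob {n1 n2 r : ℕ} (Xt X : Matrix (Fin n1) (Fin n2) ℝ)
    (Vt : Matrix (Fin n1) (Fin r) ℝ) (St : Matrix (Fin r) (Fin r) ℝ)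
    (Wt : Matrix (Fin n2) (Fin r) ℝ) (hXt : IsCompactSVD Xt Vt St Wt)
    (V : Matrix (Fin n1) (Fin r) ℝ) (S : Matrix (Fin r) (Fin r) ℝ)
    (W : Matrix (Fin n2) (Fin r) ℝ) (hX : IsCompactSVD X V S W)
    (σ : ℝ) (hσpos : 0 < σ) (hσle : ∀ j, σ ≤ St j j) :
    frobNorm (Vt * Vtᵀ - V * Vᵀ) ≤ Real.sqrt 2 * frobNorm (Xt - X) / σ := by
  obtain ⟨hXtE, hVt, hWt, hStoff, hStpos⟩ := hXt
  obtain ⟨hXE, hV, hW, hSoff, hSpos⟩ := hX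
  set D := Xt - X with hD
  set Q := V * Vᵀ with hQ
  set P := Vt * Vtᵀ with hP
  set Tt := Matrix.diagonal (fun j => (St j j)⁻¹) with hTt
  have hPs : Pᵀ = P := by rw [hP, Matrix.transpose_mul, Matrix.transpose_transpose]
  have hQs : Qᵀ = Q := by rw [hQ, Matrix.transpose_mul, Matrix.transpose_transpose]
  have hPi : P * P = P := by
    rw [hP, Matrix.mul_assoc, ← Matrix.mul_assoc Vtᵀ, hVt, Matrix.one_mul]
  have hQi : Q * Q = Q := by
    rw [hQ, Matrix.mul_assoc, ← Matrix.mul_assoc Vᵀ, hV, Matrix.one_mul]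
  have htr : Matrix.trace P = Matrix.trace Q := by
    rw [hP, hQ, Matrix.trace_mul_comm, Matrix.trace_mul_comm V, hVt, hV]
  have hStTt : St * Tt = 1 := by
    ext i j
    rw [hTt, Matrix.mul_diagonal]
    by_cases h : i = j
    · subst h; simp [mul_inv_cancel₀ (hStpos i).ne']
    · simp [hStoff i j h, Matrix.one_apply_ne h]
  have hXtWtTt : Xt * (Wt * Tt) = Vt := by
    rw [hXtE, Matrix.mul_assoc (Vt * St), ← Matrix.mul_assoc Wtᵀ, hWt, Matrix.one_mul,
      Matrix.mul_assoc, hStTt, Matrix.mul_one]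
  have hQX : Q * X = X := by
    rw [hQ, hXE]
    simp only [← Matrix.mul_assoc]
    rw [Matrix.mul_assoc V Vᵀ V, hV, Matrix.mul_one]
  have hkey : Vt - Q * Vt = (D - Q * D) * (Wt * Tt) := by
    have hDm : D * (Wt * Tt) = Vt - X * (Wt * Tt) := by
      rw [hD, Matrix.sub_mul, hXtWtTt]
    have hQD : (Q * D) * (Wt * Tt) = Q * Vt - X * (Wt * Tt) := by
      rw [Matrix.mul_assoc, hDm, Matrix.mul_sub, ← Matrix.mul_assoc, hQX]
    rw [Matrix.sub_mul, hDm, hQD]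
    abel
  have g1 : gF (P - Q) = 2 * gF (P - Q * P) :=
    gF_PQ P Q hPs hQs hPi hQi htr
  have g2 : P - Q * P = (Vt - Q * Vt) * Vtᵀ := by
    rw [Matrix.sub_mul, hP, ← Matrix.mul_assoc]
  have g3 : gF ((Vt - Q * Vt) * Vtᵀ) = gF (Vt - Q * Vt) :=
    gF_mul_isometryT_right_eq _ Vt hVt
  have g4 : gF (Vt - Q * Vt) = gF (((D - Q * D) * Wt) * Tt) := by
    rw [hkey, show (D - Q * D) * (Wt * Tt) = ((D - Q * D) * Wt) * Tt from
      (Matrix.mul_assoc _ _ _).symm]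
  have g5 : gF (((D - Q * D) * Wt) * Tt) ≤ gF ((D - Q * D) * Wt) / σ ^ 2 :=
    gF_mul_diag_le _ _ σ hσpos hσle
  have g6 : gF ((D - Q * D) * Wt) ≤ gF (D - Q * D) :=
    gF_mul_isometry_right_le _ Wt hWt
  have g7 : gF (D - Q * D) ≤ gF D := gF_sub_proj_le Q hQs hQi D
  have gchain : gF (P - Q) ≤ 2 * (gF D / σ ^ 2) := by
    rw [g1, g2, g3, g4]
    have hσ2 : (0:ℝ) < σ ^ 2 := by positivity
    have h8 := (div_le_div_iff_of_pos_right hσ2).mpr (le_trans g6 g7)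
    linarith [g5, h8]
  have hfr : frobNorm (P - Q) = Real.sqrt (gF (P - Q)) := by
    rw [frobNorm, frobNorm_eq]
  rw [hfr]
  calc Real.sqrt (gF (P - Q)) ≤ Real.sqrt (2 * (gF D / σ ^ 2)) := Real.sqrt_le_sqrt gchain
    _ = Real.sqrt 2 * (Real.sqrt (gF D) / σ) := by
        rw [Real.sqrt_mul (by norm_num), Real.sqrt_div (gF_nonneg D), Real.sqrt_sq hσpos.le]
    _ = Real.sqrt 2 * frobNorm D / σ := by rw [frobNorm, frobNorm_eq]; ring


open ContinuousLinearMap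

def mcl {a b : ℕ} (A : Matrix (Fin a) (Fin b) ℝ) :
    EuclideanSpace ℝ (Fin b) →L[ℝ] EuclideanSpace ℝ (Fin a) :=
  LinearMap.toContinuousLinearMap (Matrix.toEuclideanLin A)

lemma specNorm_eq {a b : ℕ} (A : Matrix (Fin a) (Fin b) ℝ) : specNorm A = ‖mcl A‖ := rfl

lemma mcl_mul {a b c : ℕ} (A : Matrix (Fin a) (Fin b) ℝ) (B : Matrix (Fin b) (Fin c) ℝ) :
    mcl (A * B) = (mcl A).comp (mcl B) := by
  ext x i
  simp [mcl, Matrix.toEuclideanLin_apply, Matrix.mulVec_mulVec]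

lemma mcl_one {a : ℕ} : mcl (1 : Matrix (Fin a) (Fin a) ℝ) = 1 := by
  ext x i
  simp [mcl, Matrix.toEuclideanLin_apply]

lemma mcl_sub {a b : ℕ} (A B : Matrix (Fin a) (Fin b) ℝ) : mcl (A - B) = mcl A - mcl B := by
  simp [mcl, map_sub]

lemma mcl_transpose {a b : ℕ} (A : Matrix (Fin a) (Fin b) ℝ) :
    mcl Aᵀ = ContinuousLinearMap.adjoint (mcl A) := by
  have h : Aᵀ = Aᴴ := by
    rw [Matrix.conjTranspose_eq_transpose_of_trivial]
  rw [h, mcl, Matrix.toEuclideanLin_conjTranspose_eq_adjoint,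
    LinearMap.adjoint_toContinuousLinearMap]
  rfl

lemma mcl_diag_bound {r : ℕ} (t : Fin r → ℝ) (B : ℝ) (hB0 : 0 ≤ B)
    (hB : ∀ j, |t j| ≤ B) (z : EuclideanSpace ℝ (Fin r)) :
    ‖mcl (Matrix.diagonal t) z‖ ≤ B * ‖z‖ := by
  have hz : ∀ j, mcl (Matrix.diagonal t) z j = t j * z j := by
    intro j
    simp [mcl, Matrix.toEuclideanLin_apply, Matrix.mulVec_diagonal]
  rw [EuclideanSpace.norm_eq, EuclideanSpace.norm_eq]
  have h1 : ∑ j, ‖mcl (Matrix.diagonal t) z j‖ ^ 2 ≤ B ^ 2 * ∑ j, ‖z j‖ ^ 2 := by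
    rw [Finset.mul_sum]
    refine Finset.sum_le_sum fun j _ => ?_
    rw [hz j, Real.norm_eq_abs, Real.norm_eq_abs, abs_mul, mul_pow]
    have h2 : |t j| ^ 2 ≤ B ^ 2 := pow_le_pow_left₀ (abs_nonneg _) (hB j) 2
    have h3 : (0:ℝ) ≤ |z j| ^ 2 := by positivity
    nlinarith
  calc Real.sqrt (∑ j, ‖mcl (Matrix.diagonal t) z j‖ ^ 2)
      ≤ Real.sqrt (B ^ 2 * ∑ j, ‖z j‖ ^ 2) := Real.sqrt_le_sqrt h1
    _ = B * Real.sqrt (∑ j, ‖z j‖ ^ 2) := by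
        rw [Real.sqrt_mul (by positivity), Real.sqrt_sq hB0]

variable {F G : Type*}
  [NormedAddCommGroup F] [InnerProductSpace ℝ F] [FiniteDimensional ℝ F]
  [NormedAddCommGroup G] [InnerProductSpace ℝ G] [FiniteDimensional ℝ G]

local notation "⟪" x ", " y "⟫" => @inner ℝ _ _ x y

lemma iso_pt (u : G →L[ℝ] F) (hu : (adjoint u).comp u = 1) (z : G) :
    adjoint u (u z) = z := by
  have := ContinuousLinearMap.ext_iff.mp hu z
  simpa using this

lemma iso_norm (u : G →L[ℝ] F) (hu : (adjoint u).comp u = 1) (z : G) : ‖u z‖ = ‖z‖ := by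
  have h : ⟪u z, u z⟫ = ⟪z, z⟫ := by
    rw [← ContinuousLinearMap.adjoint_inner_right u z (u z), iso_pt u hu]
  have h2 : ‖u z‖ ^ 2 = ‖z‖ ^ 2 := by
    rw [← real_inner_self_eq_norm_sq, ← real_inner_self_eq_norm_sq, h]
  have := congrArg Real.sqrt h2
  simpa [Real.sqrt_sq, norm_nonneg] using this

/-- Pythagoras for the projection `u ∘ u*`. -/
lemma proj_pyth (u : G →L[ℝ] F) (hu : (adjoint u).comp u = 1) (x : F) :
    ‖x‖ ^ 2 = ‖u (adjoint u x)‖ ^ 2 + ‖x - u (adjoint u x)‖ ^ 2 := by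
  set a := adjoint u x with ha
  have e1 : ⟪u a, x⟫ = ⟪a, a⟫ := by
    rw [← ContinuousLinearMap.adjoint_inner_right u a x]
  have e2 : ⟪u a, u a⟫ = ⟪a, a⟫ := by
    rw [← ContinuousLinearMap.adjoint_inner_right u a (u a), iso_pt u hu]
  have horth : ⟪u a, x - u a⟫ = 0 := by
    rw [inner_sub_right, e1, e2, sub_self]
  have hx : x = u a + (x - u a) := by abel
  calc ‖x‖ ^ 2 = ‖u a + (x - u a)‖ ^ 2 := by rw [← hx]
    _ = ‖u a‖ ^ 2 + 2 * ⟪u a, x - u a⟫ + ‖x - u a‖ ^ 2 := norm_add_sq_real _ _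
    _ = ‖u a‖ ^ 2 + ‖x - u a‖ ^ 2 := by rw [horth]; ring

lemma proj_contract (u : G →L[ℝ] F) (hu : (adjoint u).comp u = 1) (x : F) :
    ‖u (adjoint u x)‖ ≤ ‖x‖ := by
  have h := proj_pyth u hu x
  have h2 : ‖u (adjoint u x)‖ ^ 2 ≤ ‖x‖ ^ 2 := by nlinarith [sq_nonneg ‖x - u (adjoint u x)‖]
  exact le_of_pow_le_pow_left₀ two_ne_zero (norm_nonneg x) h2

lemma proj_contract' (u : G →L[ℝ] F) (hu : (adjoint u).comp u = 1) (x : F) :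
    ‖x - u (adjoint u x)‖ ≤ ‖x‖ := by
  have h := proj_pyth u hu x
  have h2 : ‖x - u (adjoint u x)‖ ^ 2 ≤ ‖x‖ ^ 2 := by nlinarith [sq_nonneg ‖u (adjoint u x)‖]
  exact le_of_pow_le_pow_left₀ two_ne_zero (norm_nonneg x) h2

set_option maxHeartbeats 1000000 in
lemma spec_core
    (u w : G →L[ℝ] F)
    (hu : (adjoint u).comp u = 1)
    (hw : (adjoint w).comp w = 1)
    (R : ℝ) (hR : 0 ≤ R)
    (ha : ∀ z : G, ‖u z - w (adjoint w (u z))‖ ≤ R * ‖z‖) :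
    ∀ x : F, ‖u (adjoint u x) - w (adjoint w x)‖ ≤ R * ‖x‖ := by
  have hdecomp : ∀ y : F,
      ‖u (adjoint u y) - w (adjoint w y)‖ ^ 2
        = ‖u (adjoint u y) - w (adjoint w (u (adjoint u y)))‖ ^ 2
          + ‖w (adjoint w (y - u (adjoint u y)))‖ ^ 2 := by
    intro y
    set py := u (adjoint u y) with hpy
    have hid : py - w (adjoint w y)
        = (py - w (adjoint w py)) - (w (adjoint w (y - py))) := by
      simp only [map_sub]
      abel
    have horth : ⟪py - w (adjoint w py), w (adjoint w (y - py))⟫ = 0 := by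
      rw [inner_sub_left]
      set b := adjoint w (y - py) with hb
      have h1 : ⟪py, w b⟫ = ⟪adjoint w py, b⟫ := by
        rw [ContinuousLinearMap.adjoint_inner_left w]
      have h2 : ⟪w (adjoint w py), w b⟫ = ⟪adjoint w py, b⟫ := by
        rw [← ContinuousLinearMap.adjoint_inner_right w (adjoint w py) (w b), iso_pt w hw]
      rw [h1, h2, sub_self]
    rw [hid, norm_sub_sq_real, horth]
    ring
  have hpypt : ∀ y : F, u (adjoint u (u (adjoint u y))) = u (adjoint u y) := by
    intro y; rw [iso_pt u hu]
  intro x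
  rcases le_or_gt 1 R with hR1 | hR1
  · -- trivial case
    have h1 : ‖u (adjoint u x) - w (adjoint w (u (adjoint u x)))‖ ≤ ‖u (adjoint u x)‖ :=
      proj_contract' w hw _
    have h2 : ‖w (adjoint w (x - u (adjoint u x)))‖ ≤ ‖x - u (adjoint u x)‖ :=
      proj_contract w hw _
    have h1' := pow_le_pow_left₀ (norm_nonneg _) h1 2
    have h2' := pow_le_pow_left₀ (norm_nonneg _) h2 2
    have h3 := hdecomp x
    have h4 := proj_pyth u hu x
    have h5 : ‖u (adjoint u x) - w (adjoint w x)‖ ^ 2 ≤ ‖x‖ ^ 2 := by linarith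
    have h6 := le_of_pow_le_pow_left₀ two_ne_zero (norm_nonneg x) h5
    calc ‖u (adjoint u x) - w (adjoint w x)‖ ≤ ‖x‖ := h6
      _ = 1 * ‖x‖ := (one_mul _).symm
      _ ≤ R * ‖x‖ := by gcongr
  · -- main case R < 1
    set c := Real.sqrt (1 - R ^ 2) with hc
    have hc2 : c ^ 2 = 1 - R ^ 2 := Real.sq_sqrt (by nlinarith)
    have hcpos : 0 < c := Real.sqrt_pos.mpr (by nlinarith)
    set m := (adjoint w).comp u with hm
    have hmz : ∀ z : G, m z = adjoint w (u z) := fun z => rfl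
    have hmlow : ∀ z : G, c * ‖z‖ ≤ ‖m z‖ := by
      intro z
      have h1 := proj_pyth w hw (u z)
      have h2 : ‖w (adjoint w (u z))‖ = ‖m z‖ := by rw [hmz, iso_norm w hw]
      have h3 : ‖u z‖ = ‖z‖ := iso_norm u hu z
      have h4 := ha z
      have h4' := pow_le_pow_left₀ (norm_nonneg _) h4 2
      have h2' : ‖w (adjoint w (u z))‖ ^ 2 = ‖m z‖ ^ 2 := by rw [h2]
      have h3' : ‖u z‖ ^ 2 = ‖z‖ ^ 2 := by rw [h3]
      have h5 : (c * ‖z‖) ^ 2 ≤ ‖m z‖ ^ 2 := by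
        rw [mul_pow, hc2]
        nlinarith [h1, h2', h3', h4']
      exact le_of_pow_le_pow_left₀ two_ne_zero (norm_nonneg _) h5
    have hminj : Function.Injective m := by
      intro z1 z2 h
      have h0 : m (z1 - z2) = 0 := by rw [map_sub, h, sub_self]
      have h2 := hmlow (z1 - z2)
      rw [h0, norm_zero] at h2
      have h3 : ‖z1 - z2‖ ≤ 0 := by nlinarith [norm_nonneg (z1 - z2)]
      exact sub_eq_zero.mp (norm_le_zero_iff.mp h3)
    have hmsurj : Function.Surjective m := by
      have h := (LinearMap.injective_iff_surjective (f := (m : G →ₗ[ℝ] G))).mp hminj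
      exact h
    set e : G ≃ₗ[ℝ] G := LinearEquiv.ofBijective (m : G →ₗ[ℝ] G) ⟨hminj, hmsurj⟩ with he
    set m' : G →L[ℝ] G := LinearMap.toContinuousLinearMap (e.symm : G →ₗ[ℝ] G) with hm'
    have hmm' : ∀ y : G, m (m' y) = y := by
      intro y
      have h1 : m (m' y) = e (e.symm y) := rfl
      rw [h1, e.apply_symm_apply]
    have hm'bound : ∀ y : G, ‖m' y‖ ≤ c⁻¹ * ‖y‖ := by
      intro y
      have h1 := hmlow (m' y)
      rw [hmm' y] at h1
      rw [inv_mul_eq_div, le_div_iff₀ hcpos]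
      linarith [mul_comm c ‖m' y‖, h1]
    have hm'norm : ‖m'‖ ≤ c⁻¹ := opNorm_le_bound _ (by positivity) hm'bound
    have hcomp1 : m.comp m' = 1 := by
      ext y
      simpa using hmm' y
    have hadjcomp : (adjoint m').comp (adjoint m) = 1 := by
      rw [← ContinuousLinearMap.adjoint_comp m m', hcomp1]
      rw [ContinuousLinearMap.one_def, adjoint_id]
    have hmstar : ∀ z : G, c * ‖z‖ ≤ ‖adjoint m z‖ := by
      intro z
      have h1 : z = adjoint m' (adjoint m z) := by
        have := ContinuousLinearMap.ext_iff.mp hadjcomp z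
        simpa using this.symm
      have h2 : ‖z‖ ≤ c⁻¹ * ‖adjoint m z‖ := by
        calc ‖z‖ = ‖adjoint m' (adjoint m z)‖ := by rw [← h1]
          _ ≤ ‖adjoint m'‖ * ‖adjoint m z‖ := le_opNorm _ _
          _ ≤ c⁻¹ * ‖adjoint m z‖ := by
              have : ‖adjoint m'‖ = ‖m'‖ := ContinuousLinearMap.adjoint.norm_map m'
              rw [this]
              gcongr
      calc c * ‖z‖ ≤ c * (c⁻¹ * ‖adjoint m z‖) := by gcongr
        _ = ‖adjoint m z‖ := by field_simp
    have hadjm : ∀ z : G, adjoint m z = adjoint u (w z) := by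
      intro z
      have h1 : adjoint m = (adjoint u).comp (adjoint (adjoint w)) :=
        ContinuousLinearMap.adjoint_comp (adjoint w) u
      rw [h1, adjoint_adjoint]
      rfl
    -- bound on the second orthonormal family under the projection of the first
    have hbz : ∀ z : G, ‖w z - u (adjoint u (w z))‖ ≤ R * ‖z‖ := by
      intro z
      have h1 := proj_pyth u hu (w z)
      have h2 : ‖u (adjoint u (w z))‖ = ‖adjoint m z‖ := by
        rw [hadjm, iso_norm u hu]
      have h3 : ‖w z‖ = ‖z‖ := iso_norm w hw z
      have h4 := hmstar z
      have h5 : (‖w z - u (adjoint u (w z))‖) ^ 2 ≤ (R * ‖z‖) ^ 2 := by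
        have h2' : ‖u (adjoint u (w z))‖ ^ 2 = ‖adjoint m z‖ ^ 2 := by rw [h2]
        have h3' : ‖w z‖ ^ 2 = ‖z‖ ^ 2 := by rw [h3]
        have h4' : (c * ‖z‖) ^ 2 ≤ ‖adjoint m z‖ ^ 2 :=
          pow_le_pow_left₀ (by positivity) h4 2
        have hc2' : (c * ‖z‖) ^ 2 = (1 - R ^ 2) * ‖z‖ ^ 2 := by rw [mul_pow, hc2]
        nlinarith [h1, h2', h3', h4']
      exact le_of_pow_le_pow_left₀ two_ne_zero (by positivity) h5
    -- second term bound
    have hterm2 : ∀ y : F, u (adjoint u y) = 0 → ‖w (adjoint w y)‖ ≤ R * ‖y‖ := by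
      intro y hy0
      set b := adjoint w y with hb
      set qy := w b with hqy
      have hq1 : ⟪qy, qy⟫ = ⟪qy, y⟫ := by
        have e1 : ⟪qy, qy⟫ = ⟪b, b⟫ := by
          rw [hqy, ← ContinuousLinearMap.adjoint_inner_right w b (w b), iso_pt w hw]
        have e2 : ⟪qy, y⟫ = ⟪b, b⟫ := by
          rw [hqy, ← ContinuousLinearMap.adjoint_inner_right w b y, ← hb]
        rw [e1, e2]
      have hustar_y : adjoint u y = 0 := by
        have := congrArg (adjoint u) hy0
        rwa [iso_pt u hu, map_zero] at this
      have hsplit : ⟪qy, y⟫ = ⟪qy - u (adjoint u qy), y⟫ := by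
        rw [inner_sub_left]
        have : ⟪u (adjoint u qy), y⟫ = 0 := by
          rw [← ContinuousLinearMap.adjoint_inner_right u (adjoint u qy) y, hustar_y,
            inner_zero_right]
        rw [this, sub_zero]
      have hqb : ‖qy - u (adjoint u qy)‖ ≤ R * ‖qy‖ := by
        have := hbz b
        rw [← hqy] at this
        calc ‖qy - u (adjoint u qy)‖ ≤ R * ‖b‖ := this
          _ = R * ‖qy‖ := by rw [hqy, iso_norm w hw]
      have hfinal : ‖qy‖ ^ 2 ≤ R * ‖qy‖ * ‖y‖ := by
        have h1 : ‖qy‖ ^ 2 = ⟪qy, y⟫ := by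
          rw [← hq1, real_inner_self_eq_norm_sq]
        rw [h1, hsplit]
        calc ⟪qy - u (adjoint u qy), y⟫ ≤ ‖qy - u (adjoint u qy)‖ * ‖y‖ :=
              real_inner_le_norm _ _
          _ ≤ R * ‖qy‖ * ‖y‖ := mul_le_mul_of_nonneg_right hqb (norm_nonneg y)
      by_cases hq0 : ‖qy‖ = 0
      · rw [hq0]; positivity
      · have hqpos : 0 < ‖qy‖ := lt_of_le_of_ne (norm_nonneg _) (Ne.symm hq0)
        nlinarith [hfinal]
    -- assemble
    have h3 := hdecomp x
    set px := u (adjoint u x) with hpx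
    have ht1 : ‖px - w (adjoint w px)‖ ≤ R * ‖px‖ := by
      have h := ha (adjoint u x)
      rw [← hpx] at h
      calc ‖px - w (adjoint w px)‖ ≤ R * ‖adjoint u x‖ := h
        _ = R * ‖px‖ := by rw [hpx, iso_norm u hu]
    have ht2 : ‖w (adjoint w (x - px))‖ ≤ R * ‖x - px‖ := by
      apply hterm2
      rw [map_sub, map_sub, hpx, hpypt x, sub_self]
    have hpyth := proj_pyth u hu x
    have ht1' := pow_le_pow_left₀ (norm_nonneg _) ht1 2
    have ht2' := pow_le_pow_left₀ (norm_nonneg _) ht2 2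
    have h5 : ‖px - w (adjoint w x)‖ ^ 2 ≤ (R * ‖x‖) ^ 2 := by
      nlinarith [h3, ht1', ht2', hpyth]
    exact le_of_pow_le_pow_left₀ two_ne_zero (by positivity) h5

lemma vside_spec {n1 n2 r : ℕ} (Xt X : Matrix (Fin n1) (Fin n2) ℝ)
    (Vt : Matrix (Fin n1) (Fin r) ℝ) (St : Matrix (Fin r) (Fin r) ℝ)
    (Wt : Matrix (Fin n2) (Fin r) ℝ) (hXt : IsCompactSVD Xt Vt St Wt)
    (V : Matrix (Fin n1) (Fin r) ℝ) (S : Matrix (Fin r) (Fin r) ℝ)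
    (W : Matrix (Fin n2) (Fin r) ℝ) (hX : IsCompactSVD X V S W)
    (σ : ℝ) (hσpos : 0 < σ) (hσle : ∀ j, σ ≤ St j j) :
    specNorm (Vt * Vtᵀ - V * Vᵀ) ≤ specNorm (Xt - X) / σ := by
  obtain ⟨hXtE, hVt, hWt, hStoff, hStpos⟩ := hXt
  obtain ⟨hXE, hV, hW, hSoff, hSpos⟩ := hX
  set D := Xt - X with hD
  set Q := V * Vᵀ with hQ
  set P := Vt * Vtᵀ with hP
  set Tt := Matrix.diagonal (fun j => (St j j)⁻¹) with hTt
  have hStTt : St * Tt = 1 := by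
    ext i j
    rw [hTt, Matrix.mul_diagonal]
    by_cases h : i = j
    · subst h; simp [mul_inv_cancel₀ (hStpos i).ne']
    · simp [hStoff i j h, Matrix.one_apply_ne h]
  have hXtWtTt : Xt * (Wt * Tt) = Vt := by
    rw [hXtE, Matrix.mul_assoc (Vt * St), ← Matrix.mul_assoc Wtᵀ, hWt, Matrix.one_mul,
      Matrix.mul_assoc, hStTt, Matrix.mul_one]
  have hQX : Q * X = X := by
    rw [hQ, hXE]
    simp only [← Matrix.mul_assoc]
    rw [Matrix.mul_assoc V Vᵀ V, hV, Matrix.mul_one]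
  have hkey : Vt - Q * Vt = (D - Q * D) * (Wt * Tt) := by
    have hDm : D * (Wt * Tt) = Vt - X * (Wt * Tt) := by
      rw [hD, Matrix.sub_mul, hXtWtTt]
    have hQD : (Q * D) * (Wt * Tt) = Q * Vt - X * (Wt * Tt) := by
      rw [Matrix.mul_assoc, hDm, Matrix.mul_sub, ← Matrix.mul_assoc, hQX]
    rw [Matrix.sub_mul, hDm, hQD]
    abel
  -- operator level
  set u := mcl Vt with hu'
  set w := mcl V with hw'
  have hu : (adjoint u).comp u = 1 := by
    rw [hu', ← mcl_transpose, ← mcl_mul, hVt, mcl_one]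
  have hw : (adjoint w).comp w = 1 := by
    rw [hw', ← mcl_transpose, ← mcl_mul, hV, mcl_one]
  have hq : mcl Q = w.comp (adjoint w) := by
    rw [hQ, mcl_mul, hw', mcl_transpose]
  have hDnn : 0 ≤ specNorm D := by rw [specNorm_eq]; exact norm_nonneg _
  set R := specNorm D / σ with hR'
  have hR : 0 ≤ R := div_nonneg hDnn hσpos.le
  have hDbound : ∀ y, ‖mcl (D - Q * D) y‖ ≤ specNorm D * ‖y‖ := by
    intro y
    have h1 : mcl (D - Q * D) y = mcl D y - w (adjoint w (mcl D y)) := by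
      rw [mcl_sub, mcl_mul, hq]
      simp [ContinuousLinearMap.sub_apply, ContinuousLinearMap.comp_apply]
    rw [h1]
    calc ‖mcl D y - w (adjoint w (mcl D y))‖ ≤ ‖mcl D y‖ := proj_contract' w hw _
      _ ≤ ‖mcl D‖ * ‖y‖ := le_opNorm _ _
      _ = specNorm D * ‖y‖ := by rw [specNorm_eq]
  have hWtiso : (adjoint (mcl Wt)).comp (mcl Wt) = 1 := by
    rw [← mcl_transpose, ← mcl_mul, hWt, mcl_one]
  have hTtb : ∀ z, ‖mcl Tt z‖ ≤ σ⁻¹ * ‖z‖ := by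
    intro z
    rw [hTt]
    refine mcl_diag_bound _ _ (by positivity) (fun j => ?_) z
    rw [abs_of_pos (by exact inv_pos.mpr (hStpos j))]
    exact inv_anti₀ hσpos (hσle j)
  have ha : ∀ z, ‖u z - w (adjoint w (u z))‖ ≤ R * ‖z‖ := by
    intro z
    have h1 : u z - w (adjoint w (u z)) = mcl (Vt - Q * Vt) z := by
      rw [mcl_sub, mcl_mul, hq, hu']
      simp [ContinuousLinearMap.sub_apply, ContinuousLinearMap.comp_apply]
    rw [h1, hkey, mcl_mul, mcl_mul]
    calc ‖mcl (D - Q * D) ((mcl Wt) ((mcl Tt) z))‖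
        ≤ specNorm D * ‖(mcl Wt) ((mcl Tt) z)‖ := hDbound _
      _ = specNorm D * ‖mcl Tt z‖ := by rw [iso_norm (mcl Wt) hWtiso]
      _ ≤ specNorm D * (σ⁻¹ * ‖z‖) := mul_le_mul_of_nonneg_left (hTtb z) hDnn
      _ = R * ‖z‖ := by rw [hR']; field_simp
  have hcore := spec_core u w hu hw R hR ha
  rw [specNorm_eq]
  refine ContinuousLinearMap.opNorm_le_bound _ hR (fun x => ?_)
  have h1 : mcl (P - Q) x = u (adjoint u x) - w (adjoint w x) := by
    rw [mcl_sub, hP, hQ, mcl_mul, mcl_mul, mcl_transpose, mcl_transpose, hu', hw']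
    simp [ContinuousLinearMap.sub_apply, ContinuousLinearMap.comp_apply]
  rw [h1]
  exact hcore x

lemma quad_diag (B : Matrix (Fin n2) (Fin r) ℝ) (e : Fin r → ℝ) (y : Fin n2 → ℝ) :
    y ⬝ᵥ ((B * Matrix.diagonal e * Bᵀ) *ᵥ y) = ∑ j, e j * ((Bᵀ *ᵥ y) j) ^ 2 := by
  rw [← Matrix.mulVec_mulVec, ← Matrix.mulVec_mulVec, Matrix.dotProduct_mulVec,
    ← Matrix.mulVec_transpose]
  simp [Matrix.mulVec_diagonal, dotProduct, sq]
  refine Finset.sum_congr rfl fun j _ => ?_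
  ring

lemma sigma_props (hr : 0 < r) (Xt : Matrix (Fin n1) (Fin n2) ℝ)
    (Vt : Matrix (Fin n1) (Fin r) ℝ) (St : Matrix (Fin r) (Fin r) ℝ)
    (Wt : Matrix (Fin n2) (Fin r) ℝ) (hXt : IsCompactSVD Xt Vt St Wt) :
    0 < sigmaMin Xt ∧ ∀ j, sigmaMin Xt ≤ St j j := by
  obtain ⟨hXtE, hVt, hWt, hStoff, hStpos⟩ := hXt
  haveI : Nonempty (Fin r) := ⟨⟨0, hr⟩⟩
  obtain ⟨j₀, -, hj₀⟩ := Finset.exists_min_image Finset.univ (fun j => St j j)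
    Finset.univ_nonempty
  set d : Fin r → ℝ := fun j => St j j with hd
  have hSd : St = Matrix.diagonal d := by
    ext i j
    by_cases h : i = j
    · subst h; simp [hd, Matrix.diagonal_apply_eq]
    · simp [hStoff i j h, Matrix.diagonal_apply_ne _ h]
  set hH := (Matrix.isHermitian_conjTranspose_mul_self Xt : (Xtᵀ * Xt).IsHermitian) with hhH
  set eigs := hH.eigenvalues with heigs
  have hA2 : Xtᵀ * Xt = Wt * Matrix.diagonal (fun j => d j ^ 2) * Wtᵀ := by
    rw [hXtE]
    simp only [Matrix.transpose_mul, Matrix.transpose_transpose]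
    rw [hSd, Matrix.diagonal_transpose]
    calc Wt * (Matrix.diagonal d * Vtᵀ) * (Vt * Matrix.diagonal d * Wtᵀ)
        = Wt * Matrix.diagonal d * (Vtᵀ * Vt) * (Matrix.diagonal d * Wtᵀ) := by
          simp only [Matrix.mul_assoc]
      _ = Wt * (Matrix.diagonal d * Matrix.diagonal d) * Wtᵀ := by
          rw [hVt]; simp only [Matrix.mul_one, Matrix.mul_assoc]
      _ = Wt * Matrix.diagonal (fun j => d j ^ 2) * Wtᵀ := by
          rw [Matrix.diagonal_mul_diagonal]
          simp only [Matrix.mul_assoc, sq]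
  -- the candidate eigenvector for the minimal diagonal value
  set s0 : Fin r → ℝ := Pi.single j₀ 1 with hs0
  set y : Fin n2 → ℝ := Wt *ᵥ s0 with hy
  have hs0ne : s0 ≠ 0 := by
    intro h
    have := congrFun h j₀
    simp [hs0] at this
  have hWty : Wtᵀ *ᵥ y = s0 := by
    rw [hy, Matrix.mulVec_mulVec, hWt, Matrix.one_mulVec]
  have hyne : y ≠ 0 := by
    intro h
    apply hs0ne
    rw [← hWty, h, Matrix.mulVec_zero]
  have h1 : Matrix.diagonal (fun j => d j ^ 2) *ᵥ s0 = (d j₀ ^ 2) • s0 := by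
    funext k
    by_cases h : k = j₀
    · subst h; simp [Matrix.mulVec_diagonal, hs0, Pi.single_apply]
    · simp [Matrix.mulVec_diagonal, hs0, Pi.single_apply, h]
  have hAy : (Xtᵀ * Xt) *ᵥ y = (d j₀ ^ 2) • y := by
    rw [hA2, ← Matrix.mulVec_mulVec, ← Matrix.mulVec_mulVec, hWty, h1,
      Matrix.mulVec_smul, ← hy]
  -- spectral theorem transfer: d j₀ ^ 2 is an eigenvalue
  have hmem : ∃ i, d j₀ ^ 2 = eigs i := by
    have hspec := hH.spectral_theorem
    simp only [Unitary.conjStarAlgAut_apply, Unitary.coe_star] at hspec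
    set U : Matrix (Fin n2) (Fin n2) ℝ := (hH.eigenvectorUnitary : Matrix (Fin n2) (Fin n2) ℝ)
      with hU
    have hdiag : Matrix.diagonal (RCLike.ofReal ∘ eigs) = Matrix.diagonal eigs := by
      congr 1
    have hUU : U * star U = 1 := Matrix.mem_unitaryGroup_iff.mp hH.eigenvectorUnitary.2
    have hUU' : star U * U = 1 := Matrix.mem_unitaryGroup_iff'.mp hH.eigenvectorUnitary.2
    set z : Fin n2 → ℝ := star U *ᵥ y with hz
    have hzne : z ≠ 0 := by
      intro h
      apply hyne
      have : U *ᵥ z = y := by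
        rw [hz, Matrix.mulVec_mulVec, hUU, Matrix.one_mulVec]
      rw [← this, h, Matrix.mulVec_zero]
    have hDz : Matrix.diagonal eigs *ᵥ z = (d j₀ ^ 2) • z := by
      have h2 : (U * Matrix.diagonal eigs * star U) *ᵥ y = (d j₀ ^ 2) • y := by
        rw [← hdiag, ← hspec]
        exact hAy
      have h3 : star U *ᵥ ((U * Matrix.diagonal eigs * star U) *ᵥ y)
          = Matrix.diagonal eigs *ᵥ z := by
        simp only [hz, Matrix.mulVec_mulVec]
        rw [← Matrix.mul_assoc, ← Matrix.mul_assoc, hUU', Matrix.one_mul]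
      rw [← h3, h2, Matrix.mulVec_smul, hz]
    obtain ⟨i, hi⟩ := Function.ne_iff.mp hzne
    refine ⟨i, ?_⟩
    have := congrFun hDz i
    simp [Matrix.mulVec_diagonal] at this
    have h3 : eigs i * z i = d j₀ ^ 2 * z i := by
      simpa [Pi.smul_apply, smul_eq_mul] using this
    have := mul_right_cancel₀ hi h3
    exact this.symm
  -- every element of the singular-value set is ≥ d j₀
  have hlow : ∀ s : ℝ, 0 < s → (∃ i, s ^ 2 = eigs i) → d j₀ ≤ s := by
    rintro s hs ⟨i, hi⟩
    set yi : Fin n2 → ℝ := ⇑(hH.eigenvectorBasis i) with hyi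
    have hEig : (Xtᵀ * Xt) *ᵥ yi = eigs i • yi := hH.mulVec_eigenvectorBasis i
    have hyine : yi ≠ 0 := by
      intro h
      have hnorm : ‖hH.eigenvectorBasis i‖ = 1 := hH.eigenvectorBasis.orthonormal.1 i
      have : (hH.eigenvectorBasis i : EuclideanSpace ℝ (Fin n2)) = 0 := by
        apply PiLp.ext
        intro k
        have := congrFun h k
        simpa [hyi] using this
      rw [this, norm_zero] at hnorm
      norm_num at hnorm
    have hdyy : 0 < yi ⬝ᵥ yi := by
      rcases Function.ne_iff.mp hyine with ⟨k, hk⟩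
      have h1 : (0:ℝ) < ∑ l, yi l * yi l := by
        apply Finset.sum_pos' (fun l _ => mul_self_nonneg _)
        exact ⟨k, Finset.mem_univ k, mul_self_pos.mpr hk⟩
      simpa [dotProduct] using h1
    have hq1 : yi ⬝ᵥ ((Xtᵀ * Xt) *ᵥ yi) = eigs i * (yi ⬝ᵥ yi) := by
      rw [hEig, dotProduct_smul, smul_eq_mul]
    have hq2 : yi ⬝ᵥ ((Xtᵀ * Xt) *ᵥ ((Xtᵀ * Xt) *ᵥ yi)) = eigs i ^ 2 * (yi ⬝ᵥ yi) := by
      rw [hEig, Matrix.mulVec_smul, hEig, smul_smul, dotProduct_smul, smul_eq_mul, sq]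
    have hAA : (Xtᵀ * Xt) * (Xtᵀ * Xt) = Wt * Matrix.diagonal (fun j => d j ^ 4) * Wtᵀ := by
      rw [hA2]
      calc (Wt * Matrix.diagonal (fun j => d j ^ 2) * Wtᵀ)
            * (Wt * Matrix.diagonal (fun j => d j ^ 2) * Wtᵀ)
          = Wt * Matrix.diagonal (fun j => d j ^ 2) * (Wtᵀ * Wt)
            * (Matrix.diagonal (fun j => d j ^ 2) * Wtᵀ) := by simp only [Matrix.mul_assoc]
        _ = Wt * (Matrix.diagonal (fun j => d j ^ 2) * Matrix.diagonal (fun j => d j ^ 2))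
            * Wtᵀ := by rw [hWt]; simp only [Matrix.mul_one, Matrix.mul_assoc]
        _ = Wt * Matrix.diagonal (fun j => d j ^ 4) * Wtᵀ := by
            rw [Matrix.diagonal_mul_diagonal]
            have : (fun j => d j ^ 2 * d j ^ 2) = fun j => d j ^ 4 := by
              funext j; ring
            rw [this]
    have hQ2 : yi ⬝ᵥ ((Xtᵀ * Xt) *ᵥ ((Xtᵀ * Xt) *ᵥ yi))
        = ∑ j, d j ^ 4 * ((Wtᵀ *ᵥ yi) j) ^ 2 := by
      rw [Matrix.mulVec_mulVec, hAA, quad_diag]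
    have hQ1 : yi ⬝ᵥ ((Xtᵀ * Xt) *ᵥ yi) = ∑ j, d j ^ 2 * ((Wtᵀ *ᵥ yi) j) ^ 2 := by
      rw [hA2, quad_diag]
    have hineq : d j₀ ^ 2 * ∑ j, d j ^ 2 * ((Wtᵀ *ᵥ yi) j) ^ 2
        ≤ ∑ j, d j ^ 4 * ((Wtᵀ *ᵥ yi) j) ^ 2 := by
      rw [Finset.mul_sum]
      refine Finset.sum_le_sum fun j _ => ?_
      have h1 : d j₀ ≤ d j := hj₀ j (Finset.mem_univ j)
      have h2 : 0 < d j₀ := hStpos j₀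
      have h3 : 0 ≤ ((Wtᵀ *ᵥ yi) j) ^ 2 := sq_nonneg _
      have h4 : d j₀ ^ 2 ≤ d j ^ 2 := pow_le_pow_left₀ h2.le h1 2
      have h5 : 0 ≤ d j ^ 2 * ((Wtᵀ *ᵥ yi) j) ^ 2 := by positivity
      nlinarith [h4, h5]
    -- combine
    have hcomb : d j₀ ^ 2 * (s ^ 2 * (yi ⬝ᵥ yi)) ≤ s ^ 2 * (s ^ 2 * (yi ⬝ᵥ yi)) := by
      have e1 : eigs i * (yi ⬝ᵥ yi) = s ^ 2 * (yi ⬝ᵥ yi) := by rw [← hi]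
      have e2 : eigs i ^ 2 * (yi ⬝ᵥ yi) = s ^ 2 * (s ^ 2 * (yi ⬝ᵥ yi)) := by
        rw [← hi]; ring
      calc d j₀ ^ 2 * (s ^ 2 * (yi ⬝ᵥ yi)) = d j₀ ^ 2 * (eigs i * (yi ⬝ᵥ yi)) := by rw [e1]
        _ = d j₀ ^ 2 * (yi ⬝ᵥ ((Xtᵀ * Xt) *ᵥ yi)) := by rw [hq1]
        _ = d j₀ ^ 2 * ∑ j, d j ^ 2 * ((Wtᵀ *ᵥ yi) j) ^ 2 := by rw [hQ1]
        _ ≤ ∑ j, d j ^ 4 * ((Wtᵀ *ᵥ yi) j) ^ 2 := hineq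
        _ = yi ⬝ᵥ ((Xtᵀ * Xt) *ᵥ ((Xtᵀ * Xt) *ᵥ yi)) := hQ2.symm
        _ = eigs i ^ 2 * (yi ⬝ᵥ yi) := hq2
        _ = s ^ 2 * (s ^ 2 * (yi ⬝ᵥ yi)) := e2
    have hsq : d j₀ ^ 2 ≤ s ^ 2 := by
      have hpos : 0 < s ^ 2 * (yi ⬝ᵥ yi) := by positivity
      exact le_of_mul_le_mul_right (by linarith [hcomb]) hpos
    exact le_of_pow_le_pow_left₀ two_ne_zero hs.le hsq
  -- conclude
  have hbdd : BddBelow {s : ℝ | 0 < s ∧ ∃ i : Fin n2, s ^ 2 = eigs i} :=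
    ⟨0, fun s hs => hs.1.le⟩
  have hmem' : d j₀ ∈ {s : ℝ | 0 < s ∧ ∃ i : Fin n2, s ^ 2 = eigs i} :=
    ⟨hStpos j₀, hmem⟩
  have hup : sigmaMin Xt ≤ d j₀ := csInf_le hbdd hmem'
  have hlow' : d j₀ ≤ sigmaMin Xt := by
    apply le_csInf ⟨d j₀, hmem'⟩
    rintro s ⟨hs1, hs2⟩
    exact hlow s hs1 hs2
  constructor
  · exact lt_of_lt_of_le (hStpos j₀) hlow'
  · intro j
    exact le_trans hup (hj₀ j (Finset.mem_univ j))


end S9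
end

/-- Perturbation bounds for the orthogonal projections onto the
singular subspaces of two rank-`r` matrices. -/
theorem statement9 {n1 n2 r : ℕ}
    (Xt X : Matrix (Fin n1) (Fin n2) ℝ)
    (Vt : Matrix (Fin n1) (Fin r) ℝ) (St : Matrix (Fin r) (Fin r) ℝ)
    (Wt : Matrix (Fin n2) (Fin r) ℝ) (hXt : IsCompactSVD Xt Vt St Wt)
    (V : Matrix (Fin n1) (Fin r) ℝ) (S : Matrix (Fin r) (Fin r) ℝ)
    (W : Matrix (Fin n2) (Fin r) ℝ) (hX : IsCompactSVD X V S W) :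
    specNorm (Vt * Vtᵀ - V * Vᵀ) ≤ specNorm (Xt - X) / sigmaMin Xt ∧
    frobNorm (Vt * Vtᵀ - V * Vᵀ) ≤ Real.sqrt 2 * frobNorm (Xt - X) / sigmaMin Xt ∧
    specNorm (Wt * Wtᵀ - W * Wᵀ) ≤ specNorm (Xt - X) / sigmaMin Xt ∧
    frobNorm (Wt * Wtᵀ - W * Wᵀ) ≤ Real.sqrt 2 * frobNorm (Xt - X) / sigmaMin Xt := by
  
  rcases Nat.eq_zero_or_pos r with hr0 | hr
  · -- rank 0 : both projections are zero
    subst hr0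
    have hz : ∀ (n : ℕ) (M : Matrix (Fin n) (Fin 0) ℝ) (N : Matrix (Fin n) (Fin 0) ℝ),
        M * Nᵀ = 0 := by
      intro n M N
      ext i j
      simp [Matrix.mul_apply]
    have hsig : 0 ≤ sigmaMin Xt := Real.sInf_nonneg (fun s hs => hs.1.le)
    have hspec0 : ∀ {a b : ℕ} (A : Matrix (Fin a) (Fin b) ℝ), 0 ≤ specNorm A := by
      intro a b A
      rw [S9.specNorm_eq]
      exact norm_nonneg _
    have hfrob0 : ∀ {a b : ℕ} (A : Matrix (Fin a) (Fin b) ℝ), 0 ≤ frobNorm A :=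
      fun A => Real.sqrt_nonneg _
    have hzero_spec : ∀ {a : ℕ}, specNorm (0 : Matrix (Fin a) (Fin a) ℝ) = 0 := by
      intro a
      rw [S9.specNorm_eq]
      have : S9.mcl (0 : Matrix (Fin a) (Fin a) ℝ) = 0 := by
        ext x i
        simp [S9.mcl, Matrix.toEuclideanLin_apply]
      rw [this, norm_zero]
    have hzero_frob : ∀ {a : ℕ}, frobNorm (0 : Matrix (Fin a) (Fin a) ℝ) = 0 := by
      intro a
      simp [frobNorm]
    refine ⟨?_, ?_, ?_, ?_⟩
    · rw [hz _ Vt Vt, hz _ V V, sub_zero, hzero_spec]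
      exact div_nonneg (hspec0 _) hsig
    · rw [hz _ Vt Vt, hz _ V V, sub_zero, hzero_frob]
      exact div_nonneg (mul_nonneg (Real.sqrt_nonneg 2) (hfrob0 _)) hsig
    · rw [hz _ Wt Wt, hz _ W W, sub_zero, hzero_spec]
      exact div_nonneg (hspec0 _) hsig
    · rw [hz _ Wt Wt, hz _ W W, sub_zero, hzero_frob]
      exact div_nonneg (mul_nonneg (Real.sqrt_nonneg 2) (hfrob0 _)) hsig
  · -- positive rank
    obtain ⟨hσpos, hσle⟩ := S9.sigma_props hr Xt Vt St Wt hXt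
    -- transposed SVDs
    have hSts : Stᵀ = St := by
      ext i j
      by_cases h : i = j
      · subst h; rfl
      · rw [Matrix.transpose_apply, hXt.2.2.2.1 i j h, hXt.2.2.2.1 j i (Ne.symm h)]
    have hSs : Sᵀ = S := by
      ext i j
      by_cases h : i = j
      · subst h; rfl
      · rw [Matrix.transpose_apply, hX.2.2.2.1 i j h, hX.2.2.2.1 j i (Ne.symm h)]
    have hXtT : IsCompactSVD Xtᵀ Wt St Vt := by
      obtain ⟨hE, hV', hW', hoff, hpos⟩ := hXt
      refine ⟨?_, hW', hV', hoff, hpos⟩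
      rw [hE, Matrix.transpose_mul, Matrix.transpose_mul, Matrix.transpose_transpose,
        hSts, ← Matrix.mul_assoc]
    have hXT : IsCompactSVD Xᵀ W S V := by
      obtain ⟨hE, hV', hW', hoff, hpos⟩ := hX
      refine ⟨?_, hW', hV', hoff, hpos⟩
      rw [hE, Matrix.transpose_mul, Matrix.transpose_mul, Matrix.transpose_transpose,
        hSs, ← Matrix.mul_assoc]
    have hts : specNorm (Xtᵀ - Xᵀ) = specNorm (Xt - X) := by
      rw [← Matrix.transpose_sub, S9.specNorm_eq, S9.specNorm_eq, S9.mcl_transpose]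
      exact ContinuousLinearMap.adjoint.norm_map _
    have htf : frobNorm (Xtᵀ - Xᵀ) = frobNorm (Xt - X) := by
      rw [← Matrix.transpose_sub, frobNorm, frobNorm, S9.frobNorm_eq, S9.frobNorm_eq,
        S9.gF_transpose]
    refine ⟨?_, ?_, ?_, ?_⟩
    · exact S9.vside_spec Xt X Vt St Wt hXt V S W hX _ hσpos hσle
    · exact S9.vside_frob Xt X Vt St Wt hXt V S W hX _ hσpos hσle
    · have h := S9.vside_spec Xtᵀ Xᵀ Wt St Vt hXtT W S V hXT _ hσpos hσle
      rwa [hts] at h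
    · have h := S9.vside_frob Xtᵀ Xᵀ Wt St Vt hXtT W S V hXT _ hσpos hσle
      rwa [htf] at h
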